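/- Let L₁ ≥ L₂ ≥ ⋯ ≥ L_m ≥ 0 with total P = Σᵢ Lᵢ, and let 0 ≤ i₀ < m and Q = Σ_{i=1}^{i₀} Lᵢ. Suppose L_{i₀+1} ≤ (3/2)·(P − Q)/(m − i₀). Let T₁ ≥ T₂ ≥ ⋯ ≥ T_m ≥ 0 with Σᵢ Tᵢ = P and Σ_{i=1}^{i₀} Tᵢ ≥ Q, and assume Σ_{i=1}^k Lᵢ ≤ Σ_{i=1}^k Tᵢ for all k ≤ i₀. Then for every k with i₀ < k ≤ m, Σ_{i=1}^k Lᵢ ≤ (3/2)·Σ_{i=1}^k Tᵢ. -/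

import Mathlib

set_option maxHeartbeats 1000000 in
/-- Final step of `WAR(Pm(NP)) ≤ 3/2`: if `L₁ ≥ ⋯ ≥ L_m ≥ 0` with total `P`,
`Q = Σ_{i≤i₀} Lᵢ`, and `L_{i₀+1} ≤ (3/2)(P − Q)/(m − i₀)`, then for any
nonincreasing nonnegative `T` with total `P`, `Σ_{i≤i₀} Tᵢ ≥ Q`, and
`Σ_{i≤k} Lᵢ ≤ Σ_{i≤k} Tᵢ` for `k ≤ i₀`, we have
`Σ_{i≤k} Lᵢ ≤ (3/2) Σ_{i≤k} Tᵢ` for every `i₀ < k ≤ m`. -/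
theorem lpt_three_halves (m i₀ : ℕ) (L T : ℕ → ℝ)
    (hi₀ : i₀ < m)
    (hL : ∀ i j, 1 ≤ i → i ≤ j → j ≤ m → L j ≤ L i)
    (hL0 : ∀ i, 1 ≤ i → i ≤ m → 0 ≤ L i)
    (hT : ∀ i j, 1 ≤ i → i ≤ j → j ≤ m → T j ≤ T i)
    (hT0 : ∀ i, 1 ≤ i → i ≤ m → 0 ≤ T i)
    (htot : ∑ i ∈ Finset.Icc 1 m, T i = ∑ i ∈ Finset.Icc 1 m, L i)
    (hQ : ∑ i ∈ Finset.Icc 1 i₀, L i ≤ ∑ i ∈ Finset.Icc 1 i₀, T i)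
    (hLk : ∀ k, k ≤ i₀ → ∑ i ∈ Finset.Icc 1 k, L i ≤ ∑ i ∈ Finset.Icc 1 k, T i)
    (hnext : L (i₀ + 1) ≤ (3 / 2) *
      ((∑ i ∈ Finset.Icc 1 m, L i - ∑ i ∈ Finset.Icc 1 i₀, L i) / ((m : ℝ) - i₀))) :
    ∀ k, i₀ < k → k ≤ m →
      ∑ i ∈ Finset.Icc 1 k, L i ≤ (3 / 2) * ∑ i ∈ Finset.Icc 1 k, T i := by
  intro k hik hkm
  -- rewrite all Icc 1 sums as Ioc 0 sums
  have hIcc : ∀ n : ℕ, Finset.Icc 1 n = Finset.Ioc 0 n := by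
    intro n; rw [← Finset.Icc_add_one_left_eq_Ioc]; rfl
  simp only [hIcc] at *
  set Q := ∑ i ∈ Finset.Ioc 0 i₀, L i with hQdef
  set P := ∑ i ∈ Finset.Ioc 0 m, L i with hPdef
  set Qb := ∑ i ∈ Finset.Ioc 0 i₀, T i with hQbdef
  -- split sums
  have hsplitL : Q + ∑ i ∈ Finset.Ioc i₀ k, L i = ∑ i ∈ Finset.Ioc 0 k, L i :=
    Finset.sum_Ioc_consecutive _ (Nat.zero_le _) hik.le
  have hsplitT : Qb + ∑ i ∈ Finset.Ioc i₀ k, T i = ∑ i ∈ Finset.Ioc 0 k, T i :=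
    Finset.sum_Ioc_consecutive _ (Nat.zero_le _) hik.le
  have hsplitTm : (∑ i ∈ Finset.Ioc 0 k, T i) + ∑ i ∈ Finset.Ioc k m, T i
      = ∑ i ∈ Finset.Ioc 0 m, T i :=
    Finset.sum_Ioc_consecutive _ (Nat.zero_le _) hkm
  have hsplitLm : Q + ∑ i ∈ Finset.Ioc i₀ m, L i = P :=
    Finset.sum_Ioc_consecutive _ (Nat.zero_le _) (hi₀.le)
  set A := ∑ i ∈ Finset.Ioc i₀ k, L i with hAdef
  set S₁ := ∑ i ∈ Finset.Ioc i₀ k, T i with hS₁def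
  set S₂ := ∑ i ∈ Finset.Ioc k m, T i with hS₂def
  have hc : (0:ℝ) < (k : ℝ) - i₀ := by
    have : (i₀:ℝ) < k := by exact_mod_cast hik
    linarith
  have hd : (0:ℝ) < (m : ℝ) - i₀ := by
    have : (i₀:ℝ) < m := by exact_mod_cast hi₀
    linarith
  have he : (0:ℝ) ≤ (m : ℝ) - k := by
    have : (k:ℝ) ≤ m := by exact_mod_cast hkm
    linarith
  -- A ≤ (k - i₀) * L (i₀+1)
  have hA : A ≤ ((k:ℝ) - i₀) * L (i₀ + 1) := by
    have := Finset.sum_le_card_nsmul (Finset.Ioc i₀ k) L (L (i₀ + 1)) ?_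
    · rwa [Nat.card_Ioc, nsmul_eq_mul, Nat.cast_sub hik.le] at this
    · intro x hx
      rw [Finset.mem_Ioc] at hx
      exact hL (i₀ + 1) x (Nat.le_add_left 1 i₀) hx.1 (hx.2.trans hkm)
  -- S₁ ≥ (k - i₀) * T k
  have hS₁ : ((k:ℝ) - i₀) * T k ≤ S₁ := by
    have := Finset.card_nsmul_le_sum (Finset.Ioc i₀ k) T (T k) ?_
    · rwa [Nat.card_Ioc, nsmul_eq_mul, Nat.cast_sub hik.le] at this
    · intro x hx
      rw [Finset.mem_Ioc] at hx
      exact hT x k (Nat.one_le_iff_ne_zero.mpr (by omega)) hx.2 hkm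
  -- S₂ ≤ (m - k) * T k
  have hS₂ : S₂ ≤ ((m:ℝ) - k) * T k := by
    have := Finset.sum_le_card_nsmul (Finset.Ioc k m) T (T k) ?_
    · rwa [Nat.card_Ioc, nsmul_eq_mul, Nat.cast_sub hkm] at this
    · intro x hx
      rw [Finset.mem_Ioc] at hx
      exact hT k x (by omega) hx.1.le hx.2
  have hTk : 0 ≤ T k := hT0 k (by omega) hkm
  have hPQ : Q ≤ P := by
    have h0 : 0 ≤ ∑ i ∈ Finset.Ioc i₀ m, L i := by
      apply Finset.sum_nonneg
      intro i hi; rw [Finset.mem_Ioc] at hi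
      exact hL0 i (by omega) hi.2
    linarith [hsplitLm]
  have hQ0 : 0 ≤ Q := by
    apply Finset.sum_nonneg
    intro i hi; rw [Finset.mem_Ioc] at hi
    exact hL0 i (by omega) (hi.2.trans hi₀.le)
  have hP : Qb + S₁ + S₂ = P := by
    have := htot
    linarith [hsplitT, hsplitTm]
  -- clear the division in hnext
  have hnext' : L (i₀ + 1) * ((m:ℝ) - i₀) ≤ (3/2) * (P - Q) := by
    rw [mul_comm (3/2 : ℝ)] at hnext
    calc L (i₀ + 1) * ((m:ℝ) - i₀) ≤ ((P - Q) / ((m:ℝ) - i₀) * (3/2)) * ((m:ℝ) - i₀) := by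
          apply mul_le_mul_of_nonneg_right hnext hd.le
      _ = (3/2) * (P - Q) := by field_simp
  rw [← hsplitL, ← hsplitT]
  -- key inequality, all divisions cleared; multiply goal by d = m - i₀ > 0
  rw [← mul_le_mul_iff_of_pos_right hd]
  -- derived facts
  have key1 : ((m:ℝ) - i₀) * A ≤ (3/2) * ((k:ℝ) - i₀) * (P - Q) := by
    nlinarith [mul_le_mul_of_nonneg_left hnext' hc.le,
      mul_le_mul_of_nonneg_left hA hd.le]
  have key2 : ((k:ℝ) - i₀) * P + ((m:ℝ) - k) * Qb ≤ ((m:ℝ) - i₀) * (Qb + S₁) := by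
    nlinarith [mul_le_mul_of_nonneg_left hS₂ hc.le,
      mul_le_mul_of_nonneg_left hS₁ he, hP]
  have hQb : Q ≤ Qb := hQ
  linarith [key1, key2, mul_nonneg he (sub_nonneg.mpr hQb), mul_nonneg hd.le hQ0]
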